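/- Let X be a real Banach space, let A : X ⇉ X* be a maximal monotone linear relation, and let C be a nonempty closed convex subset of X with dom A ∩ int C ≠ ∅. Then A + N_C is of type (FPV). -/

import Mathlib

open Set Filter Pointwise

noncomputable section

variable {X : Type*}

abbrev Dual' (X : Type*) [NormedAddCommGroup X] [NormedSpace ℝ X] := X →L[ℝ] ℝ

section Defs
variable [NormedAddCommGroup X] [NormedSpace ℝ X]

/-- `A` is a monotone operator. -/
def MonotoneOp (A : X → Set (Dual' X)) : Prop :=
  ∀ x y (x' y' : Dual' X), x' ∈ A x → y' ∈ A y → 0 ≤ (x' - y') (x - y)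

/-- `A` is maximal monotone: monotone, and every monotonically related pair is in the graph. -/
def MaxMonotone (A : X → Set (Dual' X)) : Prop :=
  MonotoneOp A ∧
    ∀ x (x' : Dual' X), (∀ y y', y' ∈ A y → 0 ≤ (x' - y') (x - y)) → x' ∈ A x

/-- domain of a set-valued operator -/
def domOp (A : X → Set (Dual' X)) : Set X := {x | (A x).Nonempty}

/-- pointwise Minkowski sum of two set-valued operators -/
def opSum (A B : X → Set (Dual' X)) : X → Set (Dual' X) := fun x => A x + B x

/-- normal cone operator of a set `C` -/
def normalCone (C : Set X) : X → Set (Dual' X) :=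
  fun x => {x' | x ∈ C ∧ ∀ c ∈ C, x' (c - x) ≤ 0}

/-- the Fitzpatrick function of `A` -/
def fitz (A : X → Set (Dual' X)) : X × Dual' X → EReal :=
  fun p => ⨆ q ∈ {q : X × Dual' X | q.2 ∈ A q.1},
    ((q.2 p.1 + p.2 q.1 - q.2 q.1 : ℝ) : EReal)

/-- `A` is maximal monotone of type (FPV) -/
def FPV (A : X → Set (Dual' X)) : Prop :=
  MaxMonotone A ∧
    ∀ U : Set X, IsOpen U → Convex ℝ U → (U ∩ domOp A).Nonempty →
      ∀ x (x' : Dual' X), x ∈ U →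
        (∀ y y', y' ∈ A y → y ∈ U → 0 ≤ (x' - y') (x - y)) → x' ∈ A x

/-- `A` is a linear relation: its graph is a linear subspace of `X × X*` -/
def LinearRel (A : X → Set (Dual' X)) : Prop :=
  (0 : Dual' X) ∈ A 0 ∧
  (∀ x y (x' y' : Dual' X), x' ∈ A x → y' ∈ A y → x' + y' ∈ A (x + y)) ∧
  (∀ (c : ℝ) x (x' : Dual' X), x' ∈ A x → c • x' ∈ A (c • x))

/-- subdifferential of an extended-real-valued function -/
def subdiff (f : X → EReal) : X → Set (Dual' X) :=
  fun x => {x' | ∀ y, ((x' (y - x) : ℝ) : EReal) + f x ≤ f y}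

/-- `f` is proper: never `⊥` and not identically `⊤` -/
def ProperFun (f : X → EReal) : Prop := (∀ x, f x ≠ ⊥) ∧ ∃ x, f x ≠ ⊤

/-- convexity for extended-real-valued functions -/
def EConvexOn (f : X → EReal) : Prop :=
  ∀ x y (t : ℝ), 0 ≤ t → t ≤ 1 →
    f (t • x + (1 - t) • y) ≤ (t : EReal) * f x + ((1 - t : ℝ) : EReal) * f y

/-- effective domain of an extended-real-valued function -/
def domFun (f : X → EReal) : Set X := {x | f x ≠ ⊤}

end Defs

section Aux
variable [NormedAddCommGroup X] [NormedSpace ℝ X]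

/-- key algebraic identity for convex combinations of graph points -/
lemma aux_combo_eval (xs zs as : Dual' X) (x z a : X) (τ : ℝ) :
    (xs - ((1-τ)•zs + τ•as)) (x - ((1-τ)•z + τ•a))
    = (1-τ)*((xs - zs) (x - z)) + τ*((xs - as) (x - a)) - τ*(1-τ)*((zs - as) (z - a)) := by
  simp only [ContinuousLinearMap.sub_apply, ContinuousLinearMap.add_apply,
    ContinuousLinearMap.smul_apply, map_sub, map_add, map_smul, smul_eq_mul]
  ring

lemma aux_combo_mem {A : X → Set (Dual' X)} (hlin : LinearRel A)
    {a b : X} {as bs : Dual' X} (ha : as ∈ A a) (hb : bs ∈ A b) (s t : ℝ) :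
    s • as + t • bs ∈ A (s • a + t • b) :=
  hlin.2.1 _ _ _ _ (hlin.2.2 s a as ha) (hlin.2.2 t b bs hb)

lemma aux_qpos {A : X → Set (Dual' X)} (hmono : MonotoneOp A) (h0 : (0:Dual' X) ∈ A 0)
    {z : X} {zs : Dual' X} (hz : zs ∈ A z) : 0 ≤ zs z := by
  have := hmono z 0 zs 0 hz h0
  simpa using this

lemma aux_domconv {A : X → Set (Dual' X)} (hlin : LinearRel A) : Convex ℝ (domOp A) := by
  intro p hp q hq a b _ _ _
  obtain ⟨ps, hps⟩ := hp; obtain ⟨qs, hqs⟩ := hq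
  exact ⟨_, aux_combo_mem hlin hps hqs a b⟩

lemma aux_le_closure {S : Set X} (f : Dual' X) (u : ℝ) (h : ∀ m ∈ S, u ≤ f m) {x : X}
    (hx : x ∈ closure S) : u ≤ f x :=
  closure_minimal h (isClosed_le continuous_const f.continuous) hx

lemma aux_le_closure' {S : Set X} (f : Dual' X) (u : ℝ) (h : ∀ m ∈ S, f m ≤ u) {x : X}
    (hx : x ∈ closure S) : f x ≤ u :=
  closure_minimal h (isClosed_le f.continuous continuous_const) hx

lemma aux_vanish_closure {S : Set X} (f : Dual' X) (h : ∀ m ∈ S, f m = 0) {x : X}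
    (hx : x ∈ closure S) : f x = 0 :=
  le_antisymm (aux_le_closure' f 0 (fun m hm => (h m hm).le) hx)
    (aux_le_closure f 0 (fun m hm => (h m hm).ge) hx)

/-- if every functional vanishing on the graph-domain vanishes at `x`, then `x` is in the
closure of the domain -/
lemma aux_mem_closure_dom {A : X → Set (Dual' X)} (hlin : LinearRel A) {x : X}
    (h : ∀ f : Dual' X, (∀ z zs, zs ∈ A z → f z = 0) → f x = 0) :
    x ∈ closure (domOp A) := by
  by_contra hx
  obtain ⟨f, u, hf, hfx⟩ := geometric_hahn_banach_closed_point
    ((aux_domconv hlin).closure) isClosed_closure hx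
  have hfz : ∀ z zs, zs ∈ A z → f z = 0 := by
    intro z zs hzs
    by_contra hne
    have hforall : ∀ t : ℝ, t * f z < u := by
      intro t
      have hm : (t • z) ∈ domOp A := ⟨t • zs, hlin.2.2 t z zs hzs⟩
      have := hf _ (subset_closure hm)
      simpa using this
    have h1 := hforall ((u + 1)/ f z)
    rw [div_mul_cancel₀ _ hne] at h1; linarith
  have hx0 : f x = 0 := h f hfz
  rw [hx0] at hfx
  have h0dom : (0:X) ∈ domOp A := ⟨0, hlin.1⟩
  have := hf _ (subset_closure h0dom)
  simp only [map_zero] at this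
  linarith

lemma aux_subset_closure_interior {C : Set X} (hCconv : Convex ℝ C) {a0 : X}
    (ha0 : a0 ∈ interior C) : C ⊆ closure (interior C) := by
  intro c hc
  rw [Metric.mem_closure_iff]
  intro ε hε
  set t : ℝ := min 1 (ε / (2 * (‖a0 - c‖ + 1))) with ht
  have hden : 0 < 2 * (‖a0 - c‖ + 1) := by positivity
  have ht0 : 0 < t := lt_min one_pos (by positivity)
  have ht1 : t ≤ 1 := min_le_left _ _
  refine ⟨t • a0 + (1 - t) • c, hCconv.combo_interior_closure_mem_interior ha0
    (subset_closure hc) ht0 (by linarith) (by ring), ?_⟩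
  have heq : c - (t • a0 + (1 - t) • c) = t • (c - a0) := by
    rw [smul_sub]; module
  rw [dist_eq_norm, heq, norm_smul]
  have h2 : ‖c - a0‖ < ‖a0 - c‖ + 1 := by rw [norm_sub_rev]; linarith
  have h3 : t ≤ ε / (2 * (‖a0 - c‖ + 1)) := min_le_right _ _
  have h4 : |t| = t := abs_of_pos ht0
  rw [Real.norm_eq_abs, h4]
  calc t * ‖c - a0‖ ≤ (ε / (2 * (‖a0 - c‖ + 1))) * ‖c - a0‖ := by
        apply mul_le_mul_of_nonneg_right h3 (norm_nonneg _)
    _ < ε := by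
        rw [div_mul_eq_mul_div, div_lt_iff₀ hden]
        nlinarith [norm_nonneg (c - a0), norm_sub_rev a0 c ▸ le_of_lt h2]

lemma aux_mem_closure_inter {A : X → Set (Dual' X)} (hlin : LinearRel A) {C : Set X}
    (hCconv : Convex ℝ C)
    {a0 : X} (ha0M : a0 ∈ domOp A) {ρ : ℝ} (hρ0 : 0 < ρ) (hball : Metric.ball a0 ρ ⊆ C)
    {x : X} (hxC : x ∈ C) (hxcl : x ∈ closure (domOp A)) : x ∈ closure (domOp A ∩ C) := by
  rw [Metric.mem_closure_iff]
  intro ε hε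
  set ε1 : ℝ := ε / (2 * (1 + ‖x - a0‖ / ρ)) with hε1
  have hd : 0 < 1 + ‖x - a0‖ / ρ := by positivity
  have hε10 : 0 < ε1 := by positivity
  obtain ⟨m, hm, hdm⟩ := Metric.mem_closure_iff.1 hxcl ε1 hε10
  rw [dist_eq_norm] at hdm
  set τ : ℝ := ε1 / (ε1 + ρ) with hτ
  have hsum : 0 < ε1 + ρ := by positivity
  have hτ0 : 0 < τ := by positivity
  have hτ1 : τ < 1 := by rw [hτ, div_lt_one hsum]; linarith
  set u' : X := (τ⁻¹ * (1 - τ)) • (m - x) with hu'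
  have hufact : τ⁻¹ * (1 - τ) = ρ / ε1 := by
    rw [hτ]; field_simp; ring
  have hunorm : ‖u'‖ < ρ := by
    rw [hu', norm_smul, hufact, Real.norm_eq_abs, abs_of_pos (by positivity)]
    rw [div_mul_eq_mul_div, div_lt_iff₀ hε10, norm_sub_rev]
    nlinarith [mul_lt_mul_of_pos_left hdm hρ0]
  set w : X := (1 - τ) • m + τ • a0 with hw
  obtain ⟨ms, hms⟩ := hm
  obtain ⟨a0s, ha0s⟩ := ha0M
  have hwM : w ∈ domOp A := ⟨_, aux_combo_mem hlin hms ha0s (1 - τ) τ⟩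
  have hwrepr : w = (1 - τ) • x + τ • (a0 + u') := by
    rw [hw, hu', smul_add, smul_smul]
    have hcoef : τ * (τ⁻¹ * (1 - τ)) = 1 - τ := by field_simp
    rw [hcoef]
    module
  have hwC : w ∈ C := by
    rw [hwrepr]
    apply hCconv hxC (hball ?_) (by linarith) (le_of_lt hτ0) (by ring)
    rw [Metric.mem_ball, dist_eq_norm]
    simpa using hunorm
  refine ⟨w, ⟨hwM, hwC⟩, ?_⟩
  have hxmw : x - w = (1 - τ) • (x - m) + τ • (x - a0) := by
    rw [hw, smul_sub, smul_sub]; module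
  rw [dist_eq_norm, hxmw]
  have hb1 : ‖(1 - τ) • (x - m) + τ • (x - a0)‖ ≤ (1-τ) * ‖x - m‖ + τ * ‖x - a0‖ := by
    calc ‖(1 - τ) • (x - m) + τ • (x - a0)‖ ≤ ‖(1 - τ) • (x - m)‖ + ‖τ • (x - a0)‖ :=
          norm_add_le _ _
      _ = (1-τ) * ‖x - m‖ + τ * ‖x - a0‖ := by
          rw [norm_smul, norm_smul, Real.norm_eq_abs, Real.norm_eq_abs,
            abs_of_pos (by linarith : (0:ℝ) < 1 - τ), abs_of_pos hτ0]
  have hτle : τ ≤ ε1 / ρ := by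
    rw [hτ, div_le_div_iff₀ hsum hρ0]
    nlinarith
  have hstep : (1-τ) * ‖x - m‖ + τ * ‖x - a0‖ ≤ ε1 + (ε1/ρ) * ‖x - a0‖ := by
    have h1 : (1-τ) * ‖x - m‖ ≤ 1 * ‖x - m‖ :=
      mul_le_mul_of_nonneg_right (by linarith) (norm_nonneg _)
    have h2 : τ * ‖x - a0‖ ≤ (ε1/ρ) * ‖x - a0‖ :=
      mul_le_mul_of_nonneg_right hτle (norm_nonneg _)
    nlinarith [norm_nonneg (x-m), hdm]
  have hfin : ε1 + (ε1/ρ) * ‖x - a0‖ < ε := by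
    have hρne : ρ ≠ 0 := ne_of_gt hρ0
    have hdne : (1 + ‖x - a0‖ / ρ) ≠ 0 := ne_of_gt hd
    have heq2 : ε1 + (ε1/ρ) * ‖x - a0‖ = ε1 * (1 + ‖x - a0‖ / ρ) := by
      field_simp
    rw [heq2, hε1]
    rw [div_mul_eq_mul_div, mul_comm (2:ℝ) _, ← div_div, mul_div_assoc,
      div_self hdne, mul_one]
    linarith
  linarith [hb1, hstep, hfin]

lemma aux_sub_add_eval (xs zs n : Dual' X) (v : X) :
    (xs - (zs + n)) v = (xs - zs) v - n v := by
  simp only [ContinuousLinearMap.sub_apply, ContinuousLinearMap.add_apply]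
  ring

set_option maxHeartbeats 2000000 in
lemma aux_stepB {A : X → Set (Dual' X)} (hlin : LinearRel A)
    {C : Set X} (hCcl : IsClosed C) (hCconv : Convex ℝ C)
    {a0 : X} (ha0M : a0 ∈ domOp A) (ha0C : a0 ∈ interior C)
    {U : Set X} (hU : IsOpen U) (hUconv : Convex ℝ U)
    {u0 : X} (hu0U : u0 ∈ U) (hu0M : u0 ∈ domOp A) (hu0C : u0 ∈ C)
    {x : X} {xs : Dual' X} (hxU : x ∈ U) (hxcl : x ∈ closure (domOp A))
    (hR1 : ∀ z zs, zs ∈ A z → z ∈ C → z ∈ U → 0 ≤ (xs - zs) (x - z))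
    (hrel' : ∀ z zs n, zs ∈ A z → n ∈ normalCone C z → z ∈ U →
      0 ≤ (xs - (zs + n)) (x - z)) :
    x ∈ C := by
  by_contra hxC
  obtain ⟨rb, hrb0, hrb⟩ := Metric.isOpen_iff.1 hCcl.isOpen_compl x hxC
  obtain ⟨rU, hrU0, hrU⟩ := Metric.isOpen_iff.1 hU x hxU
  obtain ⟨rU0, hrU00, hrU0b⟩ := Metric.isOpen_iff.1 hU u0 hu0U
  -- the point a1 ∈ dom A ∩ interior C ∩ U
  set t1 : ℝ := min 1 (rU0 / (2 * (‖a0 - u0‖ + 1))) with ht1def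
  have ht10 : 0 < t1 := lt_min one_pos (by positivity)
  have ht11 : t1 ≤ 1 := min_le_left _ _
  set a1 : X := t1 • a0 + (1 - t1) • u0 with ha1def
  have ha1U : a1 ∈ U := by
    apply hrU0b
    rw [Metric.mem_ball, dist_eq_norm]
    have : a1 - u0 = t1 • (a0 - u0) := by rw [ha1def]; module
    rw [this, norm_smul, Real.norm_eq_abs, abs_of_pos ht10]
    have h3 : t1 ≤ rU0 / (2 * (‖a0 - u0‖ + 1)) := min_le_right _ _
    have hden : (0:ℝ) < 2 * (‖a0 - u0‖ + 1) := by positivity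
    calc t1 * ‖a0 - u0‖ ≤ (rU0 / (2 * (‖a0 - u0‖ + 1))) * ‖a0 - u0‖ :=
          mul_le_mul_of_nonneg_right h3 (norm_nonneg _)
      _ < rU0 := by
          rw [div_mul_eq_mul_div, div_lt_iff₀ hden]
          nlinarith [norm_nonneg (a0 - u0)]
  have ha1int : a1 ∈ interior C :=
    hCconv.combo_interior_closure_mem_interior ha0C (subset_closure hu0C) ht10
      (by linarith) (by ring)
  obtain ⟨a0s, ha0s⟩ := ha0M
  obtain ⟨u0s, hu0s⟩ := hu0M
  have ha1M : a1 ∈ domOp A := ⟨_, aux_combo_mem hlin ha0s hu0s t1 (1 - t1)⟩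
  obtain ⟨ρ1, hρ10, hρ1⟩ := Metric.isOpen_iff.1 isOpen_interior a1 ha1int
  -- choice of δ
  set δ : ℝ := min rU (min (rb/2) (rb * ρ1 / (4 * (‖x - a1‖ + rb)))) / 2 with hδdef
  have hδ0 : 0 < δ := by
    apply div_pos _ two_pos
    apply lt_min hrU0
    apply lt_min (by positivity) (by positivity)
  have hδrU : δ < rU := by
    have := min_le_left rU (min (rb/2) (rb * ρ1 / (4 * (‖x - a1‖ + rb))))
    rw [hδdef]; linarith
  have hδrb : δ ≤ rb/2 := by
    have h1 := min_le_right rU (min (rb/2) (rb * ρ1 / (4 * (‖x - a1‖ + rb))))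
    have h2 := min_le_left (rb/2) (rb * ρ1 / (4 * (‖x - a1‖ + rb)))
    rw [hδdef]; linarith
  have hδκ : δ < rb * ρ1 / (4 * (‖x - a1‖ + rb)) := by
    have h1 := min_le_right rU (min (rb/2) (rb * ρ1 / (4 * (‖x - a1‖ + rb))))
    have h2 := min_le_right (rb/2) (rb * ρ1 / (4 * (‖x - a1‖ + rb)))
    have h3 : (0:ℝ) < rb * ρ1 / (4 * (‖x - a1‖ + rb)) := by positivity
    rw [hδdef]; linarith
  -- the point w ∈ dom A ∩ U, close to x, outside C
  obtain ⟨w, hwM, hdw⟩ := Metric.mem_closure_iff.1 hxcl δ hδ0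
  rw [dist_eq_norm] at hdw
  have hwU : w ∈ U := by
    apply hrU
    rw [Metric.mem_ball, dist_eq_norm, norm_sub_rev]
    linarith
  have hwnC : w ∉ C := by
    intro h
    exact hrb (by rw [Metric.mem_ball, dist_eq_norm, norm_sub_rev]; linarith) h
  -- the boundary point z
  set S : Set ℝ := {t | t ∈ Icc (0:ℝ) 1 ∧ a1 + t • (w - a1) ∈ C} with hSdef
  have hScl : IsClosed S := by
    apply IsClosed.inter isClosed_Icc
    have hcont : Continuous (fun t : ℝ => a1 + t • (w - a1)) :=
      continuous_const.add (continuous_id.smul continuous_const)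
    exact hCcl.preimage hcont
  have hSne : S.Nonempty := by
    refine ⟨0, ⟨le_refl 0, zero_le_one⟩, ?_⟩
    show a1 + (0:ℝ) • (w - a1) ∈ C
    simpa using interior_subset ha1int
  have hSbdd : BddAbove S := ⟨1, fun t ht => ht.1.2⟩
  set T : ℝ := sSup S with hTdef
  have hTS : T ∈ S := hScl.csSup_mem hSne hSbdd
  set z : X := a1 + T • (w - a1) with hzdef
  have hzC : z ∈ C := hTS.2
  have hT0 : 0 ≤ T := hTS.1.1
  have hT1 : T ≤ 1 := hTS.1.2
  have hTlt1 : T < 1 := by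
    rcases lt_or_eq_of_le hT1 with h | h
    · exact h
    · exfalso; apply hwnC
      have : z = w := by rw [hzdef, h]; module
      rwa [this] at hzC
  have hznint : z ∉ interior C := by
    intro hzint
    obtain ⟨εz, hεz0, hεzb⟩ := Metric.isOpen_iff.1 isOpen_interior z hzint
    set e' : ℝ := εz / (‖w - a1‖ + 1) with he'def
    have he'0 : 0 < e' := by positivity
    set t' : ℝ := min 1 (T + e') with ht'def
    have ht'S : t' ∈ S := by
      refine ⟨⟨?_, min_le_left _ _⟩, ?_⟩
      · have : (0:ℝ) ≤ T + e' := by linarith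
        exact le_min zero_le_one this
      · apply interior_subset
        apply hεzb
        rw [Metric.mem_ball, dist_eq_norm]
        have heq : a1 + t' • (w - a1) - z = (t' - T) • (w - a1) := by
          rw [hzdef]; module
        rw [heq, norm_smul, Real.norm_eq_abs]
        have h1 : T ≤ t' := le_min hT1 (by linarith)
        have h2 : t' - T ≤ e' := by
          have := min_le_right 1 (T + e')
          rw [ht'def]; linarith [min_le_right (1:ℝ) (T+e')]
        rw [abs_of_nonneg (by linarith)]
        have hden : (0:ℝ) < ‖w - a1‖ + 1 := by positivity
        calc (t' - T) * ‖w - a1‖ ≤ e' * ‖w - a1‖ :=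
              mul_le_mul_of_nonneg_right h2 (norm_nonneg _)
          _ < εz := by
              rw [he'def, div_mul_eq_mul_div, div_lt_iff₀ hden]
              nlinarith [norm_nonneg (w - a1)]
    have hle : t' ≤ T := le_csSup hSbdd ht'S
    have hgt : T < t' := lt_min hTlt1 (by linarith)
    linarith
  -- separating functional g, normal to C at z
  obtain ⟨g, hg⟩ := geometric_hahn_banach_open_point (hCconv.interior) isOpen_interior hznint
  have hga1 : g a1 < g z := hg a1 ha1int
  have hgpos : 0 < g z - g a1 := by linarith
  -- operator norm bound for g
  have hgnorm : ‖g‖ ≤ 2/ρ1 * (g z - g a1) := by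
    apply ContinuousLinearMap.opNorm_le_bound _
      (mul_nonneg (by positivity) hgpos.le)
    intro v
    rcases eq_or_ne v 0 with rfl | hv
    · simp
    · have hvn : 0 < ‖v‖ := norm_pos_iff.2 hv
      set c : ℝ := ρ1/(2*‖v‖) with hcdef
      have hc0 : 0 < c := by positivity
      have hmem : ∀ s : ℝ, |s| ≤ 1 → a1 + (s*c) • v ∈ interior C := by
        intro s hs
        apply hρ1
        rw [Metric.mem_ball, dist_eq_norm]
        have : a1 + (s*c) • v - a1 = (s*c) • v := by module
        rw [this, norm_smul, Real.norm_eq_abs, abs_mul, abs_of_pos hc0, hcdef]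
        have : |s| * (ρ1 / (2 * ‖v‖)) * ‖v‖ = |s| * (ρ1/2) := by field_simp
        rw [this]
        nlinarith
      have h1 := hg _ (hmem 1 (by norm_num))
      have h2 := hg _ (hmem (-1) (by norm_num))
      rw [map_add, map_smul, smul_eq_mul] at h1 h2
      rw [Real.norm_eq_abs]
      rw [abs_le]
      constructor
      · rw [neg_le]
        have : c * (2/ρ1 * (g z - g a1) * ‖v‖) = (g z - g a1) := by
          rw [hcdef]; field_simp
        nlinarith
      · have : c * (2/ρ1 * (g z - g a1) * ‖v‖) = (g z - g a1) := by
          rw [hcdef]; field_simp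
        nlinarith
  have hgN0 : 0 < ‖g‖ := by
    rcases (norm_nonneg g).eq_or_lt with h | h
    · exfalso
      have h1 : ‖g (z - a1)‖ ≤ ‖g‖ * ‖z - a1‖ := ContinuousLinearMap.le_opNorm g _
      rw [← h, zero_mul, Real.norm_eq_abs, map_sub] at h1
      have h2 := le_of_abs_le h1
      linarith
    · exact h
  have hT0' : 0 < T := by
    rcases hT0.eq_or_lt with h | h
    · exfalso; apply hznint
      have : z = a1 := by rw [hzdef, ← h]; simp
      rwa [this]
    · exact h
  -- key quantities
  have hgz_eq : g z - g a1 = T * g (w - a1) := by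
    rw [hzdef, map_add, map_smul, smul_eq_mul]; ring
  have hgw0 : 0 < g (w - a1) := by
    by_contra hle
    push_neg at hle
    nlinarith [hgpos, hgz_eq, mul_nonpos_of_nonneg_of_nonpos hT0 hle]
  have hgwa1 : g z - g a1 ≤ g (w - a1) := by
    rw [hgz_eq]
    exact mul_le_of_le_one_left hgw0.le hT1
  have hwz : w - z = (1 - T) • (w - a1) := by rw [hzdef]; module
  have hwzn : ‖w - z‖ = (1 - T) * ‖w - a1‖ := by
    rw [hwz, norm_smul, Real.norm_eq_abs, abs_of_pos (by linarith)]
  have hxz : rb ≤ ‖x - z‖ := by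
    by_contra h
    exact hrb (by rw [Metric.mem_ball, dist_eq_norm, norm_sub_rev]; linarith) hzC
  have hwzlb : rb - δ ≤ ‖w - z‖ := by
    have h1 : ‖x - z‖ ≤ ‖x - w‖ + ‖w - z‖ := norm_sub_le_norm_sub_add_norm_sub x w z
    linarith
  have hwa1ub : ‖w - a1‖ ≤ ‖x - a1‖ + δ := by
    have h1 : ‖w - a1‖ ≤ ‖w - x‖ + ‖x - a1‖ := norm_sub_le_norm_sub_add_norm_sub w x a1
    rw [norm_sub_rev w x] at h1
    linarith
  have hwa1pos : 0 < ‖w - a1‖ := by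
    rw [norm_pos_iff, sub_ne_zero]
    intro h
    exact hwnC (h ▸ interior_subset ha1int)
  -- positivity of g (x - z)
  have hgxz : 0 < g (x - z) := by
    have e1 : g (x - z) = g (x - w) + g (w - z) := by rw [← map_add]; congr 1; module
    have e2 : g (w - z) = (1 - T) * g (w - a1) := by rw [hwz, map_smul, smul_eq_mul]
    have e3 : -( ‖g‖ * δ) ≤ g (x - w) := by
      have := ContinuousLinearMap.le_opNorm g (x - w)
      have h2 : g (x - w) ≤ ‖g‖ * ‖x - w‖ := le_trans (le_abs_self _) (by
        rw [← Real.norm_eq_abs]; exact this)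
      have h3 : -(g (x-w)) ≤ ‖g‖ * ‖x - w‖ := by
        have := ContinuousLinearMap.le_opNorm g (w - x)
        have h4 : g (w - x) ≤ ‖g‖ * ‖w - x‖ := le_trans (le_abs_self _) (by
          rw [← Real.norm_eq_abs]; exact this)
        rw [norm_sub_rev] at h4
        have : g (w - x) = - g (x - w) := by rw [← map_neg]; congr 1; module
        linarith [this ▸ h4]
      have h5 : ‖g‖ * ‖x - w‖ ≤ ‖g‖ * δ :=
        mul_le_mul_of_nonneg_left hdw.le (norm_nonneg g)
      linarith
    have e4 : (ρ1/2) * ‖g‖ ≤ g (w - a1) := by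
      have h1 := mul_le_mul_of_nonneg_left hgnorm (le_of_lt (half_pos hρ10))
      have h2 : (ρ1/2) * (2/ρ1 * (g z - g a1)) = g z - g a1 := by
        field_simp
      rw [h2] at h1
      linarith
    have e5 : 0 ≤ g (w - a1) := le_trans (by positivity) e4
    -- (1-T) * g(w-a1) * ‖w-a1‖ = ‖w-z‖ * g(w-a1) ≥ (rb - δ)*(ρ1/2)*‖g‖
    have e6 : (rb - δ) * ((ρ1/2) * ‖g‖) ≤ ((1 - T) * g (w - a1)) * ‖w - a1‖ := by
      have : ((1 - T) * g (w - a1)) * ‖w - a1‖ = ‖w - z‖ * g (w - a1) := by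
        rw [hwzn]; ring
      rw [this]
      apply mul_le_mul (by linarith) e4 (by positivity) (norm_nonneg _)
    -- conclude
    have e7 : (‖g‖ * δ) * ‖w - a1‖ < (rb - δ) * ((ρ1/2) * ‖g‖) := by
      have hxa1rb : ‖w - a1‖ ≤ ‖x - a1‖ + rb := by linarith
      have hrbδ : rb/2 ≤ rb - δ := by linarith
      have hδbound : δ * (‖x - a1‖ + rb) < rb * ρ1 / 4 := by
        have h := (lt_div_iff₀ (by positivity : (0:ℝ) < 4*(‖x - a1‖ + rb))).1 hδκ
        nlinarith [h]
      have eA : ‖g‖ * δ * ‖w - a1‖ ≤ ‖g‖ * δ * (‖x - a1‖ + rb) :=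
        mul_le_mul_of_nonneg_left hxa1rb (mul_nonneg (norm_nonneg g) hδ0.le)
      have eB : ‖g‖ * δ * (‖x - a1‖ + rb) < ‖g‖ * (rb * ρ1 / 4) := by
        rw [mul_assoc]
        exact mul_lt_mul_of_pos_left hδbound hgN0
      have eC : ‖g‖ * (rb * ρ1 / 4) ≤ (rb - δ) * (ρ1 / 2 * ‖g‖) := by
        nlinarith [mul_nonneg hgN0.le hρ10.le, hrbδ]
      linarith
    have e8 : ‖g‖ * δ * ‖w - a1‖ < ((1 - T) * g (w - a1)) * ‖w - a1‖ :=
      lt_of_lt_of_le e7 e6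
    have e9 : ‖g‖ * δ < (1 - T) * g (w - a1) := (mul_lt_mul_iff_left₀ hwa1pos).1 e8
    linarith
  -- z is in dom A ∩ C ∩ U, g is a normal vector at z: blow up
  have hzM : ∃ zs, zs ∈ A z := by
    obtain ⟨a1s, ha1s⟩ := ha1M
    obtain ⟨ws, hws⟩ := hwM
    refine ⟨(1-T) • a1s + T • ws, ?_⟩
    have := aux_combo_mem hlin ha1s hws (1-T) T
    have heq : (1-T) • a1 + T • w = z := by rw [hzdef]; module
    rwa [heq] at this
  obtain ⟨zs, hzs⟩ := hzM
  have hzU : z ∈ U := by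
    have := hUconv ha1U hwU (by linarith : (0:ℝ) ≤ 1 - T) hT0 (by ring)
    have heq : (1-T) • a1 + T • w = z := by rw [hzdef]; module
    rwa [heq] at this
  have hgC : ∀ c ∈ C, g c ≤ g z := by
    intro c hc
    have hc' : c ∈ closure (interior C) := aux_subset_closure_interior hCconv ha0C hc
    exact aux_le_closure' g (g z) (fun m hm => (hg m hm).le) hc'
  set K : ℝ := ((xs - zs) (x - z) + 1) / g (x - z) with hKdef
  have hK0 : 0 < K := by
    apply div_pos _ hgxz
    have := hR1 z zs hzs hzC hzU
    linarith
  have hKgN : (K • g) ∈ normalCone C z := by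
    refine ⟨hzC, fun c hc => ?_⟩
    have h1 : g (c - z) ≤ 0 := by rw [map_sub]; linarith [hgC c hc]
    have : (K • g) (c - z) = K * g (c - z) := by
      rw [ContinuousLinearMap.smul_apply, smul_eq_mul]
    rw [this]
    exact mul_nonpos_of_nonneg_of_nonpos hK0.le h1
  have hfinal := hrel' z zs (K • g) hzs hKgN hzU
  rw [aux_sub_add_eval] at hfinal
  rw [ContinuousLinearMap.smul_apply, smul_eq_mul] at hfinal
  rw [hKdef, div_mul_cancel₀ _ (ne_of_gt hgxz)] at hfinal
  linarith

lemma aux_decomp (F : (X × ℝ) →L[ℝ] ℝ) (p : X × ℝ) :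
    F p = F (p.1, 0) + p.2 * F (0, 1) := by
  have h : p = (p.1, (0:ℝ)) + p.2 • ((0:X), (1:ℝ)) := by
    ext
    · simp
    · simp
  nth_rewrite 1 [h]
  rw [map_add, map_smul, smul_eq_mul]

/-- convexity of the approximate-violation sets -/
lemma aux_E_convex {A : X → Set (Dual' X)} (hmono : MonotoneOp A) (hlin : LinearRel A)
    (x : X) (ys : Dual' X) {S : Set X} (hS : Convex ℝ S) :
    Convex ℝ {p : X × ℝ | p.1 ∈ S ∧ ∃ zs ∈ A p.1, (ys - zs) (x - p.1) ≤ p.2} := by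
  rintro ⟨z1, s1⟩ ⟨hz1S, zs1, hzs1, hval1⟩ ⟨z2, s2⟩ ⟨hz2S, zs2, hzs2, hval2⟩ a b ha hb hab
  have hmono12 := hmono z1 z2 zs1 zs2 hzs1 hzs2
  refine ⟨hS hz1S hz2S ha hb hab, a • zs1 + b • zs2, aux_combo_mem hlin hzs1 hzs2 a b, ?_⟩
  have ha' : a = 1 - b := by linarith
  have hkey := aux_combo_eval ys zs1 zs2 x z1 z2 b
  show (ys - (a • zs1 + b • zs2)) (x - (a • z1 + b • z2)) ≤ a * s1 + b * s2
  rw [ha', hkey]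
  nlinarith [mul_nonneg (mul_nonneg hb (by linarith : (0:ℝ) ≤ 1 - b)) hmono12]

lemma aux_Q2_convex {A : X → Set (Dual' X)} (hmono : MonotoneOp A) (hlin : LinearRel A)
    (x : X) (xs : Dual' X) :
    Convex ℝ {p : X × ℝ | ∃ ws ∈ A (p.1 + x), p.2 ≤ (xs - ws) p.1} := by
  rintro ⟨v1, t1⟩ ⟨ws1, hws1, hval1⟩ ⟨v2, t2⟩ ⟨ws2, hws2, hval2⟩ a b ha hb hab
  have hmono12 : 0 ≤ (ws1 - ws2) ((v1 + x) - (v2 + x)) :=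
    hmono (v1 + x) (v2 + x) ws1 ws2 hws1 hws2
  have hmem : a • ws1 + b • ws2 ∈ A ((a • v1 + b • v2) + x) := by
    have h := aux_combo_mem hlin hws1 hws2 a b
    have heq : a • (v1 + x) + b • (v2 + x) = (a • v1 + b • v2) + x := by
      have hx : a • x + b • x = x := by rw [← add_smul, hab, one_smul]
      rw [smul_add, smul_add, add_add_add_comm, hx]
    rwa [heq] at h
  refine ⟨a • ws1 + b • ws2, hmem, ?_⟩
  show a * t1 + b * t2 ≤ (xs - (a • ws1 + b • ws2)) (a • v1 + b • v2)
  have hexp : (xs - (a • ws1 + b • ws2)) (a • v1 + b • v2)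
      = a * ((xs - ws1) v1) + b * ((xs - ws2) v2)
        + a * b * ((ws1 - ws2) (v1 - v2)) := by
    simp only [ContinuousLinearMap.sub_apply, ContinuousLinearMap.add_apply,
      ContinuousLinearMap.smul_apply, map_add, map_smul, map_sub, smul_eq_mul]
    have hb' : b = 1 - a := by linarith
    rw [hb']; ring
  have hmono' : 0 ≤ (ws1 - ws2) (v1 - v2) := by
    have : (v1 + x) - (v2 + x) = v1 - v2 := by abel
    rwa [this] at hmono12
  rw [hexp]
  nlinarith [mul_nonneg (mul_nonneg ha hb) hmono']

set_option maxHeartbeats 1000000 in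
lemma aux_caseII {A : X → Set (Dual' X)} (hA : MaxMonotone A) (hlin : LinearRel A)
    {C : Set X} (hCconv : Convex ℝ C)
    {a0 : X} {a0s : Dual' X} (ha0s : a0s ∈ A a0) {ρ : ℝ} (hρ0 : 0 < ρ)
    (hball : Metric.ball a0 ρ ⊆ C)
    {x : X} {xs : Dual' X} (hxC : x ∈ C) (hxcl : x ∈ closure (domOp A)) :
    (x, (0:ℝ)) ∈ closure {p : X × ℝ | p.1 ∈ C ∧ ∃ zs ∈ A p.1, (xs - zs) (x - p.1) ≤ p.2} := by
  by_contra hnc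
  have hEconv : Convex ℝ {p : X × ℝ | p.1 ∈ C ∧ ∃ zs ∈ A p.1, (xs - zs) (x - p.1) ≤ p.2} :=
    aux_E_convex hA.1 hlin x xs hCconv
  have ha0C : a0 ∈ C := hball (Metric.mem_ball_self hρ0)
  have ha0M : a0 ∈ domOp A := ⟨a0s, ha0s⟩
  obtain ⟨F, u, hFE, hFx⟩ := geometric_hahn_banach_closed_point hEconv.closure
    isClosed_closure hnc
  obtain ⟨n, β, hFp⟩ : ∃ (n : Dual' X) (β : ℝ), ∀ p : X × ℝ, F p = n p.1 + p.2 * β :=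
    ⟨F.comp (ContinuousLinearMap.inl ℝ X ℝ), F ((0:X), (1:ℝ)), fun p => by
      rw [aux_decomp]; congr 1⟩
  have hFE' : ∀ z zs, zs ∈ A z → z ∈ C → ∀ s, (xs - zs) (x - z) ≤ s → n z + s * β < u := by
    intro z zs hzs hzC s hvs
    have := hFE (z, s) (subset_closure ⟨hzC, zs, hzs, hvs⟩)
    rwa [hFp] at this
  have hFx' : u < n x := by
    have := hFx
    rw [hFp] at this
    simpa using this
  -- β ≤ 0
  have hβ0 : β ≤ 0 := by
    by_contra hβpos
    push_neg at hβpos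
    set s0 : ℝ := max ((xs - a0s) (x - a0)) ((u - n a0 + 1)/β) with hs0
    have h1 := hFE' a0 a0s ha0s ha0C s0 (le_max_left _ _)
    have h2 : (u - n a0 + 1)/β ≤ s0 := le_max_right _ _
    rw [div_le_iff₀ hβpos] at h2
    nlinarith
  rcases eq_or_lt_of_le hβ0 with hβeq | hβneg
  · -- β = 0 : contradiction with x ∈ closure (dom A ∩ C)
    have hxclMC : x ∈ closure (domOp A ∩ C) :=
      aux_mem_closure_inter hlin hCconv ha0M hρ0 hball hxC hxcl
    have hlt : ∀ m ∈ domOp A ∩ C, n m ≤ u := by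
      rintro m ⟨⟨ms, hms⟩, hmC⟩
      have := hFE' m ms hms hmC _ (le_refl _)
      rw [hβeq, mul_zero] at this
      linarith
    have := aux_le_closure' n u hlt hxclMC
    linarith
  · -- β < 0
    obtain ⟨lam, hlam0, hβlam⟩ : ∃ lam : ℝ, 0 < lam ∧ β = -lam :=
      ⟨-β, by linarith, by ring⟩
    obtain ⟨ys, hysv⟩ : ∃ ys : Dual' X, ∀ v : X, ys v = xs v + lam⁻¹ * n v :=
      ⟨xs + lam⁻¹ • n, fun v => by
        simp [ContinuousLinearMap.add_apply, ContinuousLinearMap.smul_apply, smul_eq_mul]⟩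
    obtain ⟨gam, hgam_eq⟩ : ∃ gam : ℝ, gam * lam = n x - u := ⟨(n x - u)/lam, by
      field_simp⟩
    have hgam0 : 0 < gam := by
      by_contra hle
      push_neg at hle
      nlinarith [mul_nonpos_of_nonpos_of_nonneg hle hlam0.le]
    have hsubeval : ∀ (zs : Dual' X) (v : X), (ys - zs) v = (xs - zs) v + lam⁻¹ * n v := by
      intro zs v
      rw [ContinuousLinearMap.sub_apply, ContinuousLinearMap.sub_apply, hysv]
      ring
    have hstar : ∀ z zs, zs ∈ A z → z ∈ C → gam ≤ (ys - zs) (x - z) := by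
      intro z zs hzs hzC
      have h1 := hFE' z zs hzs hzC _ (le_refl _)
      rw [hβlam] at h1
      rw [← mul_le_mul_iff_left₀ hlam0, hgam_eq, hsubeval]
      have h8 : n (x - z) = n x - n z := map_sub _ _ _
      have h6 : lam⁻¹ * n (x - z) * lam = n x - n z := by rw [h8]; field_simp
      nlinarith [h1, h6]
    -- dichotomy on E₂ (no C-constraint)
    have hE2conv : Convex ℝ {p : X × ℝ |
        p.1 ∈ (univ : Set X) ∧ ∃ zs ∈ A p.1, (ys - zs) (x - p.1) ≤ p.2} :=
      aux_E_convex hA.1 hlin x ys convex_univ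
    by_cases hE2 : (x, (0:ℝ)) ∈ closure {p : X × ℝ |
        p.1 ∈ (univ : Set X) ∧ ∃ zs ∈ A p.1, (ys - zs) (x - p.1) ≤ p.2}
    · -- case IIb : mix approximate solutions with a0, contradiction with hstar
      obtain ⟨ca, hcadef⟩ : ∃ ca : ℝ, ca = (ys - a0s) (x - a0) := ⟨_, rfl⟩
      obtain ⟨ε, hε0, hεgam, hεb⟩ :
          ∃ ε : ℝ, 0 < ε ∧ ε ≤ gam/2 ∧ ε ≤ ρ * gam / (8 * (|ca| + 1)) :=
        ⟨min (gam/2) (ρ * gam / (8 * (|ca| + 1))),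
          lt_min (by linarith) (by positivity), min_le_left _ _, min_le_right _ _⟩
      obtain ⟨p, hpE2, hdp⟩ := Metric.mem_closure_iff.1 hE2 ε hε0
      obtain ⟨z, s⟩ := p
      obtain ⟨-, zs, hzs, hval⟩ := hpE2
      rw [Prod.dist_eq, max_lt_iff] at hdp
      obtain ⟨hdx, hds⟩ := hdp
      rw [dist_eq_norm] at hdx
      have hds' : |s| < ε := by
        rw [Real.dist_eq] at hds
        rw [← abs_neg]
        simpa using hds
      rcases eq_or_ne z x with rfl | hzx
      · exact hnc (subset_closure ⟨hxC, zs, hzs, by simp⟩)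
      · have hε2 : 0 < ‖z - x‖ := by
          rw [norm_pos_iff, sub_ne_zero]; exact hzx
        have hε2ε : ‖z - x‖ < ε := by rw [norm_sub_rev]; exact hdx
        obtain ⟨τ, hτdef⟩ : ∃ τ : ℝ, τ = ‖z - x‖/(‖z - x‖ + ρ/2) := ⟨_, rfl⟩
        have hsum : 0 < ‖z - x‖ + ρ/2 := by positivity
        have hτ0 : 0 < τ := by rw [hτdef]; positivity
        have hτ1 : τ < 1 := by rw [hτdef, div_lt_one hsum]; linarith
        have hws : (1-τ) • zs + τ • a0s ∈ A ((1-τ) • z + τ • a0) :=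
          aux_combo_mem hlin hzs ha0s (1-τ) τ
        have hwC : (1-τ) • z + τ • a0 ∈ C := by
          have hτne : τ ≠ 0 := ne_of_gt hτ0
          have hufact : τ⁻¹ * (1 - τ) = (ρ/2) / ‖z - x‖ := by
            rw [hτdef]; field_simp; ring
          have hunorm : ‖(τ⁻¹ * (1 - τ)) • (z - x)‖ < ρ := by
            rw [norm_smul, hufact, Real.norm_eq_abs, abs_of_pos (by positivity)]
            rw [div_mul_cancel₀ _ (ne_of_gt hε2)]
            linarith
          have hwrepr : (1-τ) • z + τ • a0
              = (1 - τ) • x + τ • (a0 + (τ⁻¹ * (1 - τ)) • (z - x)) := by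
            rw [smul_add, smul_smul]
            have hcoef : τ * (τ⁻¹ * (1 - τ)) = 1 - τ := by field_simp
            rw [hcoef]
            module
          rw [hwrepr]
          apply hCconv hxC (hball ?_) (by linarith) hτ0.le (by ring)
          rw [Metric.mem_ball, dist_eq_norm]
          simpa using hunorm
        have hstarw := hstar _ _ hws hwC
        rw [aux_combo_eval] at hstarw
        have hq : 0 ≤ (zs - a0s) (z - a0) := hA.1 z a0 zs a0s hzs ha0s
        have hc1 : (0:ℝ) < |ca| + 1 := by positivity
        have hτlt : τ < 2 * ε / ρ := by
          have h1 : τ ≤ 2 * ‖z - x‖ / ρ := by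
            rw [hτdef, div_le_div_iff₀ hsum hρ0]
            nlinarith
          have h2 : 2 * ‖z - x‖ / ρ < 2 * ε / ρ := by
            rw [div_lt_div_iff₀ hρ0 hρ0]
            nlinarith
          linarith
        have hτbound : τ * (|ca| + 1) < gam/4 := by
          have h4 : τ * (|ca| + 1) < (2 * ε / ρ) * (|ca| + 1) :=
            mul_lt_mul_of_pos_right hτlt hc1
          have h5 : (2 * ε / ρ) * (|ca| + 1) ≤ gam / 4 := by
            rw [div_mul_eq_mul_div, div_le_div_iff₀ hρ0 (by norm_num : (0:ℝ) < 4)]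
            have h6 := mul_le_mul_of_nonneg_left hεb
              (by positivity : (0:ℝ) ≤ 2 * (|ca|+1) * 4)
            have h7 : 2 * (|ca|+1) * 4 * (ρ * gam / (8 * (|ca| + 1))) = gam * ρ := by
              field_simp; ring
            nlinarith [h6, h7]
          linarith
        have hvz : (ys - zs) (x - z) ≤ s := hval
        have hsε : s < ε := lt_of_le_of_lt (le_abs_self s) hds'
        have b1 : (1-τ) * ((ys - zs) (x - z)) ≤ (1-τ) * ε :=
          mul_le_mul_of_nonneg_left (by linarith) (by linarith)
        have b2 : τ * ((ys - a0s) (x - a0)) ≤ τ * |ca| := by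
          apply mul_le_mul_of_nonneg_left _ hτ0.le
          rw [hcadef] at *
          exact le_abs_self _
        have b3 : 0 ≤ τ * (1-τ) * ((zs - a0s) (z - a0)) :=
          mul_nonneg (mul_nonneg hτ0.le (by linarith)) hq
        nlinarith [hstarw, b1, b2, b3, hτbound, hεgam]
    · -- case IIa : separate (x,0) from E₂, maximality of A gives x ∈ dom A
      obtain ⟨F2, u2, hF2E, hF2x⟩ := geometric_hahn_banach_closed_point hE2conv.closure
        isClosed_closure hE2
      obtain ⟨n2, β2, hF2p⟩ : ∃ (n2 : Dual' X) (β2 : ℝ),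
          ∀ p : X × ℝ, F2 p = n2 p.1 + p.2 * β2 :=
        ⟨F2.comp (ContinuousLinearMap.inl ℝ X ℝ), F2 ((0:X), (1:ℝ)), fun p => by
          rw [aux_decomp]; congr 1⟩
      have hF2E' : ∀ z zs, zs ∈ A z → ∀ s, (ys - zs) (x - z) ≤ s → n2 z + s * β2 < u2 := by
        intro z zs hzs s hvs
        have := hF2E (z, s) (subset_closure ⟨trivial, zs, hzs, hvs⟩)
        rwa [hF2p] at this
      have hF2x' : u2 < n2 x := by
        have := hF2x
        rw [hF2p] at this
        simpa using this
      have hβ20 : β2 ≤ 0 := by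
        by_contra hβpos
        push_neg at hβpos
        set s0 : ℝ := max ((ys - a0s) (x - a0)) ((u2 - n2 a0 + 1)/β2) with hs0
        have h1 := hF2E' a0 a0s ha0s s0 (le_max_left _ _)
        have h2 : (u2 - n2 a0 + 1)/β2 ≤ s0 := le_max_right _ _
        rw [div_le_iff₀ hβpos] at h2
        nlinarith
      rcases eq_or_lt_of_le hβ20 with hβ2eq | hβ2neg
      · -- β2 = 0
        have hvan : ∀ m ∈ domOp A, n2 m = 0 := by
          rintro m ⟨ms, hms⟩
          by_contra hne
          have hforall : ∀ t : ℝ, n2 (t • m) < u2 := by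
            intro t
            have hmem : t • ms ∈ A (t • m) := hlin.2.2 t m ms hms
            have := hF2E' (t • m) (t • ms) hmem _ (le_refl _)
            rw [hβ2eq, mul_zero] at this
            linarith
          have h1 := hforall ((u2 + 1)/ n2 m)
          rw [map_smul, smul_eq_mul, div_mul_cancel₀ _ hne] at h1
          linarith
        have hn2x : n2 x = 0 := aux_vanish_closure n2 hvan hxcl
        rw [hn2x] at hF2x'
        have hva0 := hvan a0 ha0M
        have h2 := hF2E' a0 a0s ha0s _ (le_refl _)
        rw [hβ2eq, mul_zero, hva0] at h2
        linarith
      · -- β2 < 0 : maximality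
        obtain ⟨lam2, hlam20, hβ2lam⟩ : ∃ lam2 : ℝ, 0 < lam2 ∧ β2 = -lam2 :=
          ⟨-β2, by linarith, by ring⟩
        obtain ⟨ys2, hys2v⟩ : ∃ ys2 : Dual' X, ∀ v : X, ys2 v = ys v + lam2⁻¹ * n2 v :=
          ⟨ys + lam2⁻¹ • n2, fun v => by
            simp [ContinuousLinearMap.add_apply, ContinuousLinearMap.smul_apply,
              smul_eq_mul]⟩
        obtain ⟨gam2, hgam2_eq⟩ : ∃ gam2 : ℝ, gam2 * lam2 = n2 x - u2 :=
          ⟨(n2 x - u2)/lam2, by field_simp⟩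
        have hgam20 : 0 < gam2 := by
          by_contra hle
          push_neg at hle
          nlinarith [mul_nonpos_of_nonpos_of_nonneg hle hlam20.le]
        have hsubeval2 : ∀ (zs : Dual' X) (v : X),
            (ys2 - zs) v = (ys - zs) v + lam2⁻¹ * n2 v := by
          intro zs v
          rw [ContinuousLinearMap.sub_apply, ContinuousLinearMap.sub_apply, hys2v]
          ring
        have hstar2 : ∀ z zs, zs ∈ A z → gam2 ≤ (ys2 - zs) (x - z) := by
          intro z zs hzs
          have h1 := hF2E' z zs hzs _ (le_refl _)
          rw [hβ2lam] at h1
          rw [← mul_le_mul_iff_left₀ hlam20, hgam2_eq, hsubeval2]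
          have h8 : n2 (x - z) = n2 x - n2 z := map_sub _ _ _
          have h6 : lam2⁻¹ * n2 (x - z) * lam2 = n2 x - n2 z := by rw [h8]; field_simp
          nlinarith [h1, h6]
        have hmax : ys2 ∈ A x := by
          apply hA.2
          intro y ys' hys'
          have := hstar2 y ys' hys'
          linarith
        exact hnc (subset_closure ⟨hxC, ys2, hmax, by simp⟩)

set_option maxHeartbeats 2000000 in
lemma aux_main {A : X → Set (Dual' X)} (hA : MaxMonotone A) (hlin : LinearRel A)
    {C : Set X} (hCcl : IsClosed C) (hCconv : Convex ℝ C)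
    {a0 : X} (ha0M : a0 ∈ domOp A) (ha0C : a0 ∈ interior C)
    {U : Set X} (hU : IsOpen U) (hUconv : Convex ℝ U)
    {u0 : X} (hu0U : u0 ∈ U) (hu0dom : u0 ∈ domOp (opSum A (normalCone C)))
    {x : X} {xs : Dual' X} (hxU : x ∈ U)
    (hrel : ∀ y ys, ys ∈ opSum A (normalCone C) y → y ∈ U → 0 ≤ (xs - ys) (x - y)) :
    xs ∈ opSum A (normalCone C) x := by
  obtain ⟨a0s, ha0s⟩ := ha0M
  obtain ⟨v0, hv0⟩ := hu0dom
  rw [opSum] at hv0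
  rw [Set.mem_add] at hv0
  obtain ⟨u0a, hu0a, u0n, hu0n, hv0eq⟩ := hv0
  have hu0M : u0 ∈ domOp A := ⟨u0a, hu0a⟩
  have hu0C : u0 ∈ C := hu0n.1
  have hzero : ∀ z, z ∈ C → (0 : Dual' X) ∈ normalCone C z := fun z hz =>
    ⟨hz, fun c _ => by simp⟩
  have hrel' : ∀ z zs n, zs ∈ A z → n ∈ normalCone C z → z ∈ U →
      0 ≤ (xs - (zs + n)) (x - z) := by
    intro z zs n h1 h2 h3
    exact hrel z (zs + n) (Set.mem_add.2 ⟨zs, h1, n, h2, rfl⟩) h3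
  have hR1 : ∀ z zs, zs ∈ A z → z ∈ C → z ∈ U → 0 ≤ (xs - zs) (x - z) := by
    intro z zs h1 h2 h3
    have := hrel' z zs 0 h1 (hzero z h2) h3
    rwa [add_zero] at this
  -- Step A : x ∈ closure dom A
  have hxcl : x ∈ closure (domOp A) := by
    apply aux_mem_closure_dom hlin
    intro f hf
    have hfA0 : f ∈ A 0 := by
      apply hA.2
      intro y ys hys
      have h1 : f y = 0 := hf y ys hys
      have h2 : 0 ≤ ys y := aux_qpos hA.1 hlin.1 hys
      have h3 : (f - ys) (0 - y) = ys y - f y := by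
        simp only [ContinuousLinearMap.sub_apply, map_sub, map_zero]
        ring
      rw [h3, h1]
      linarith
    have hKlin : ∀ K : ℝ, 0 ≤ (xs - u0a) (x - u0) - K * f (x - u0) := by
      intro K
      have hKf : K • f ∈ A 0 := by
        have := hlin.2.2 K 0 f hfA0
        rwa [smul_zero] at this
      have hKmem : (u0a + K • f) ∈ A u0 := by
        have := hlin.2.1 u0 0 u0a (K • f) hu0a hKf
        rwa [add_zero] at this
      have h4 := hR1 u0 (u0a + K • f) hKmem hu0C hu0U
      have hexp : (xs - (u0a + K • f)) (x - u0)
          = (xs - u0a) (x - u0) - K * f (x - u0) := by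
        rw [aux_sub_add_eval, ContinuousLinearMap.smul_apply, smul_eq_mul]
      rw [hexp] at h4
      exact h4
    have hfxu : f (x - u0) = 0 := by
      by_contra hne
      have h1 := hKlin (((xs - u0a) (x - u0) + 1) / f (x - u0))
      rw [div_mul_cancel₀ _ hne] at h1
      linarith
    have hfu0 : f u0 = 0 := hf u0 u0a hu0a
    rw [map_sub, hfu0, sub_zero] at hfxu
    exact hfxu
  -- Step B : x ∈ C
  have hxC : x ∈ C := aux_stepB hlin hCcl hCconv ⟨a0s, ha0s⟩ ha0C hU hUconv hu0U
    hu0M hu0C hxU hxcl hR1 hrel'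
  -- ball around a0 inside C
  obtain ⟨ρ, hρ0, hballi⟩ := Metric.isOpen_iff.1 isOpen_interior a0 ha0C
  have hball : Metric.ball a0 ρ ⊆ C := fun y hy => interior_subset (hballi hy)
  -- Case II refuted: (x,0) is in the closure of the violation set
  have hEcl := aux_caseII (xs := xs) hA hlin hCconv ha0s hρ0 hball hxC hxcl
  obtain ⟨r, hr0, hrU⟩ := Metric.isOpen_iff.1 hU x hxU
  -- Step D : approximate solutions near x
  have hD : ∀ ε, 0 < ε → ∃ z zs, zs ∈ A z ∧ z ∈ C ∧ z ∈ U ∧ ‖z - x‖ < ε ∧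
      0 ≤ (xs - zs) (x - z) ∧ (xs - zs) (x - z) < ε := by
    intro ε hε
    have hmin : 0 < min ε r := lt_min hε hr0
    obtain ⟨p, hpE, hdp⟩ := Metric.mem_closure_iff.1 hEcl (min ε r) hmin
    obtain ⟨z, s⟩ := p
    obtain ⟨hzC, zs, hzs, hval⟩ := hpE
    rw [Prod.dist_eq, max_lt_iff] at hdp
    obtain ⟨hdx, hds⟩ := hdp
    rw [dist_eq_norm] at hdx
    have hzU : z ∈ U := by
      apply hrU
      rw [Metric.mem_ball, dist_eq_norm, norm_sub_rev]
      exact lt_of_lt_of_le hdx (min_le_right _ _)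
    have h0 : 0 ≤ (xs - zs) (x - z) := hR1 z zs hzs hzC hzU
    have hds' : |s| < min ε r := by
      rw [Real.dist_eq] at hds
      rw [← abs_neg]
      simpa using hds
    refine ⟨z, zs, hzs, hzC, hzU, ?_, h0, ?_⟩
    · rw [norm_sub_rev]
      exact lt_of_lt_of_le hdx (min_le_left _ _)
    · calc (xs - zs) (x - z) ≤ s := hval
        _ ≤ |s| := le_abs_self s
        _ < min ε r := hds'
        _ ≤ ε := min_le_left _ _
  -- Step E : (x, xs) is monotonically related to the part of gra A over C
  have hE : ∀ w ws, ws ∈ A w → w ∈ C → 0 ≤ (xs - ws) (x - w) := by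
    intro w ws hws hwC
    by_contra hneg
    push_neg at hneg
    have hVneg : 0 < -((xs - ws) (x - w)) := by linarith
    rcases le_or_gt ‖w - x‖ (r/2) with hwx | hwx
    · have hwU : w ∈ U := by
        apply hrU
        rw [Metric.mem_ball, dist_eq_norm]
        linarith
      exact absurd (hR1 w ws hws hwC hwU) (by linarith)
    · have hwx0 : 0 < ‖w - x‖ := by linarith
      obtain ⟨τ0, hτ0def⟩ : ∃ τ0 : ℝ, τ0 = r / (2 * ‖w - x‖) := ⟨_, rfl⟩
      have hτ00 : 0 < τ0 := by rw [hτ0def]; positivity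
      have hτ01 : τ0 < 1 := by
        rw [hτ0def, div_lt_one (by positivity)]
        linarith
      have hεpos : 0 < min (r/2) (τ0 * (-((xs - ws) (x - w))) / 2) := by
        apply lt_min (by positivity)
        have := mul_pos hτ00 hVneg
        positivity
      obtain ⟨z, zs, hzs, hzC, hzU, hzx, hc0, hcε⟩ := hD _ hεpos
      have hyA : (1-τ0) • zs + τ0 • ws ∈ A ((1-τ0) • z + τ0 • w) :=
        aux_combo_mem hlin hzs hws (1-τ0) τ0
      have hyC : (1-τ0) • z + τ0 • w ∈ C := hCconv hzC hwC (by linarith) hτ00.le (by ring)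
      have hyU : (1-τ0) • z + τ0 • w ∈ U := by
        apply hrU
        rw [Metric.mem_ball, dist_eq_norm]
        have hrepr : (1-τ0) • z + τ0 • w - x = (1-τ0) • (z - x) + τ0 • (w - x) := by
          module
        rw [hrepr]
        have hb1 : ‖(1-τ0) • (z - x) + τ0 • (w - x)‖
            ≤ (1-τ0) * ‖z - x‖ + τ0 * ‖w - x‖ := by
          calc ‖(1-τ0) • (z - x) + τ0 • (w - x)‖
              ≤ ‖(1-τ0) • (z - x)‖ + ‖τ0 • (w - x)‖ := norm_add_le _ _
            _ = (1-τ0) * ‖z - x‖ + τ0 * ‖w - x‖ := by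
                rw [norm_smul, norm_smul, Real.norm_eq_abs, Real.norm_eq_abs,
                  abs_of_pos (by linarith : (0:ℝ) < 1 - τ0), abs_of_pos hτ00]
        have hτ0w : τ0 * ‖w - x‖ = r/2 := by
          have hne : ‖w - x‖ ≠ 0 := ne_of_gt hwx0
          rw [hτ0def]
          field_simp
        have hzxr : ‖z - x‖ < r/2 := lt_of_lt_of_le hzx (min_le_left _ _)
        have : (1-τ0) * ‖z - x‖ ≤ ‖z - x‖ := by nlinarith [norm_nonneg (z - x)]
        linarith
      have h1 := hR1 _ _ hyA hyC hyU
      rw [aux_combo_eval] at h1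
      have hq : 0 ≤ (zs - ws) (z - w) := hA.1 z w zs ws hzs hws
      have e1 : (1-τ0) * ((xs - zs) (x - z)) ≤ (xs - zs) (x - z) := by
        nlinarith [hc0, hτ00]
      have e2 : (xs - zs) (x - z) < τ0 * (-((xs - ws) (x - w))) / 2 :=
        lt_of_lt_of_le hcε (min_le_right _ _)
      have e3 : 0 ≤ τ0 * (1-τ0) * ((zs - ws) (z - w)) :=
        mul_nonneg (mul_nonneg hτ00.le (by linarith)) hq
      nlinarith [h1, e1, e2, e3, mul_pos hτ00 hVneg]
  -- Step F : final separation producing the normal vector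
  have hQ1open : IsOpen {p : X × ℝ | p.1 + x ∈ interior C ∧ 0 < p.2} := by
    have heq : {p : X × ℝ | p.1 + x ∈ interior C ∧ 0 < p.2}
        = ((fun p : X × ℝ => p.1 + x) ⁻¹' interior C) ∩ (Prod.snd ⁻¹' Ioi 0) := rfl
    rw [heq]
    exact (isOpen_interior.preimage (continuous_fst.add continuous_const)).inter
      (isOpen_Ioi.preimage continuous_snd)
  have hQ1conv : Convex ℝ {p : X × ℝ | p.1 + x ∈ interior C ∧ 0 < p.2} := by
    rintro ⟨v1, t1⟩ ⟨hv1, ht1⟩ ⟨v2, t2⟩ ⟨hv2, ht2⟩ a b ha hb hab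
    constructor
    · have heq : (a • (v1, t1) + b • (v2, t2) : X × ℝ).1 + x
          = a • (v1 + x) + b • (v2 + x) := by
        have hx : a • x + b • x = x := by rw [← add_smul, hab, one_smul]
        show a • v1 + b • v2 + x = a • (v1 + x) + b • (v2 + x)
        rw [smul_add, smul_add, add_add_add_comm, hx]
      rw [heq]
      exact hCconv.interior hv1 hv2 ha hb hab
    · exact convex_Ioi (0:ℝ) ht1 ht2 ha hb hab
  have hQ2conv : Convex ℝ {p : X × ℝ | ∃ ws ∈ A (p.1 + x), p.2 ≤ (xs - ws) p.1} :=
    aux_Q2_convex hA.1 hlin x xs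
  have hdisj : Disjoint {p : X × ℝ | p.1 + x ∈ interior C ∧ 0 < p.2}
      {p : X × ℝ | ∃ ws ∈ A (p.1 + x), p.2 ≤ (xs - ws) p.1} := by
    rw [Set.disjoint_left]
    rintro ⟨v, t⟩ ⟨hvC, ht⟩ ⟨ws, hws, hval⟩
    have h1 := hE (v + x) ws hws (interior_subset hvC)
    have h2 : (xs - ws) (x - (v + x)) = -((xs - ws) v) := by
      rw [show x - (v + x) = -v by abel, map_neg]
    rw [h2] at h1
    simp only [Set.mem_setOf_eq] at hval
    linarith
  obtain ⟨G, u, hG1, hG2⟩ := geometric_hahn_banach_open hQ1conv hQ1open hQ2conv hdisj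
  obtain ⟨n, β, hGp⟩ : ∃ (n : Dual' X) (β : ℝ), ∀ p : X × ℝ, G p = n p.1 + p.2 * β :=
    ⟨G.comp (ContinuousLinearMap.inl ℝ X ℝ), G ((0:X), (1:ℝ)), fun p => by
      rw [aux_decomp]; congr 1⟩
  have hG1' : ∀ c ∈ interior C, ∀ t : ℝ, 0 < t → n (c - x) + t * β < u := by
    intro c hc t ht
    have := hG1 (c - x, t) ⟨by simpa using hc, ht⟩
    rwa [hGp] at this
  have hG2' : ∀ w ws, ws ∈ A w → u ≤ n (w - x) + ((xs - ws) (w - x)) * β := by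
    intro w ws hws
    have hmem : (w - x, (xs - ws) (w - x)) ∈
        {p : X × ℝ | ∃ ws ∈ A (p.1 + x), p.2 ≤ (xs - ws) p.1} := by
      refine ⟨ws, ?_, le_refl _⟩
      rwa [sub_add_cancel]
    have := hG2 _ hmem
    rwa [hGp] at this
  have hβ0 : β ≤ 0 := by
    by_contra hβpos
    push_neg at hβpos
    have hpos1 : (0:ℝ) < max 1 ((u - n (a0 - x) + 1)/β) :=
      lt_of_lt_of_le one_pos (le_max_left _ _)
    have h1 := hG1' a0 ha0C (max 1 ((u - n (a0 - x) + 1)/β)) hpos1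
    have h2 : (u - n (a0 - x) + 1)/β ≤ max 1 ((u - n (a0 - x) + 1)/β) := le_max_right _ _
    rw [div_le_iff₀ hβpos] at h2
    nlinarith
  have hn_intC : ∀ c ∈ interior C, n (c - x) ≤ u := by
    intro c hc
    by_contra hgt
    push_neg at hgt
    obtain ⟨d, hd0, hddef⟩ : ∃ d : ℝ, 0 < d ∧ d = n (c - x) - u := ⟨_, by linarith, rfl⟩
    have h1β : (0:ℝ) < 1 - β := by linarith
    obtain ⟨t, ht_eq⟩ : ∃ t : ℝ, t * (2*(1-β)) = d := ⟨d/(2*(1-β)), by field_simp⟩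
    have ht0 : 0 < t := by nlinarith
    have h1 := hG1' c hc t ht0
    nlinarith [h1, ht_eq, mul_nonpos_of_nonneg_of_nonpos ht0.le hβ0]
  have hnC : ∀ c ∈ C, n (c - x) ≤ u := by
    intro c hc
    have hsub : interior C ⊆ {y : X | n (y - x) ≤ u} := fun m hm => hn_intC m hm
    have hcl : IsClosed {y : X | n (y - x) ≤ u} :=
      isClosed_le (n.continuous.comp (continuous_id.sub continuous_const)) continuous_const
    exact closure_minimal hsub hcl (aux_subset_closure_interior hCconv ha0C hc)
  have hu_ge : 0 ≤ u := by
    have := hnC x hxC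
    simpa using this
  rcases eq_or_lt_of_le hβ0 with hβeq | hβneg
  · -- β = 0 : contradiction
    exfalso
    have hnM : ∀ m zs, zs ∈ A m → n m = 0 := by
      intro m ms hms
      by_contra hne
      have hforall : ∀ t : ℝ, u ≤ n (t • m) - n x := by
        intro t
        have h1 := hG2' (t • m) (t • ms) (hlin.2.2 t m ms hms)
        rw [hβeq, mul_zero, add_zero, map_sub] at h1
        exact h1
      have h1 := hforall ((u + n x - 1)/n m)
      rw [map_smul, smul_eq_mul, div_mul_cancel₀ _ hne] at h1
      linarith
    have hnx : n x = 0 := aux_vanish_closure n (fun m hm => hnM m hm.choose hm.choose_spec) hxcl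
    have h2 := hG2' a0 a0s ha0s
    rw [hβeq, mul_zero, add_zero, map_sub, hnx, hnM a0 a0s ha0s, sub_zero] at h2
    have h3 := hG1' a0 ha0C 1 one_pos
    rw [hβeq, mul_zero, add_zero, map_sub, hnx, hnM a0 a0s ha0s, sub_zero] at h3
    linarith
  · -- β < 0 : construct the normal vector
    obtain ⟨lam, hlam0, hβlam⟩ : ∃ lam : ℝ, 0 < lam ∧ β = -lam :=
      ⟨-β, by linarith, by ring⟩
    have hu_le : u ≤ 0 := by
      by_contra hupos
      push_neg at hupos
      obtain ⟨εu, hεu_eq⟩ : ∃ εu : ℝ, εu * (2 * (‖n‖ + lam + 1)) = u :=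
        ⟨u/(2 * (‖n‖ + lam + 1)), by field_simp⟩
      have hεu0 : 0 < εu := by nlinarith [norm_nonneg n]
      obtain ⟨z, zs, hzs, hzC, hzU, hzx, hc0, hcε⟩ := hD εu hεu0
      have h2 := hG2' z zs hzs
      rw [hβlam] at h2
      have h3 : (xs - zs) (z - x) = -((xs - zs) (x - z)) := by
        rw [← map_neg]
        congr 1
        abel
      rw [h3] at h2
      have h4 : n (z - x) ≤ ‖n‖ * ‖z - x‖ := by
        have := n.le_opNorm (z - x)
        rw [Real.norm_eq_abs] at this
        linarith [le_abs_self (n (z - x))]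
      have h5 : ‖n‖ * ‖z - x‖ ≤ ‖n‖ * εu :=
        mul_le_mul_of_nonneg_left hzx.le (norm_nonneg n)
      have h6 : lam * ((xs - zs) (x - z)) ≤ lam * εu :=
        mul_le_mul_of_nonneg_left hcε.le hlam0.le
      nlinarith [h2, h4, h5, h6, hεu_eq, hεu0, norm_nonneg n]
    have hu_eq : u = 0 := le_antisymm hu_le hu_ge
    obtain ⟨ν, hνv⟩ : ∃ ν : Dual' X, ∀ v : X, ν v = lam⁻¹ * n v :=
      ⟨lam⁻¹ • n, fun v => by
        simp [ContinuousLinearMap.smul_apply, smul_eq_mul]⟩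
    have hνN : ν ∈ normalCone C x := by
      refine ⟨hxC, fun c hc => ?_⟩
      rw [hνv]
      have h1 := hnC c hc
      rw [hu_eq] at h1
      have := mul_le_mul_of_nonneg_left h1 (le_of_lt (inv_pos.2 hlam0))
      simpa using this
    have hmax : (xs - ν) ∈ A x := by
      apply hA.2
      intro y ys hys
      have h1 := hG2' y ys hys
      rw [hβlam, hu_eq] at h1
      have h2 : (xs - ν - ys) (x - y) = (xs - ys) (x - y) - lam⁻¹ * n (x - y) := by
        simp only [ContinuousLinearMap.sub_apply]
        rw [hνv]
        ring
      rw [h2]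
      have h3 : n (x - y) = - n (y - x) := by
        rw [← map_neg]
        congr 1
        abel
      have h4 : (xs - ys) (y - x) = -((xs - ys) (x - y)) := by
        rw [← map_neg]
        congr 1
        abel
      rw [h4] at h1
      rw [h3]
      have h5 : lam⁻¹ * n (y - x) * lam = n (y - x) := by field_simp
      nlinarith [h1, h5, mul_pos (inv_pos.2 hlam0) hlam0]
    rw [opSum, Set.mem_add]
    exact ⟨xs - ν, hmax, ν, hνN, by abel⟩

end Aux

variable [NormedAddCommGroup X] [NormedSpace ℝ X] [CompleteSpace X]

theorem stmt4' (A : X → Set (Dual' X)) (hA : MaxMonotone A) (hlin : LinearRel A)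
    (C : Set X) (hCne : C.Nonempty) (hCcl : IsClosed C) (hCconv : Convex ℝ C)
    (hint : (domOp A ∩ interior C).Nonempty) :
    MaxMonotone (opSum A (normalCone C)) ∧
    ∀ U : Set X, IsOpen U → Convex ℝ U → (U ∩ domOp (opSum A (normalCone C))).Nonempty →
      ∀ x (x' : Dual' X), x ∈ U →
        (∀ y y', y' ∈ opSum A (normalCone C) y → y ∈ U → 0 ≤ (x' - y') (x - y)) →
          x' ∈ opSum A (normalCone C) x := by
  obtain ⟨a0, ha0M, ha0C⟩ := hint
  have hmonoB : MonotoneOp (opSum A (normalCone C)) := by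
    intro p q ps qs hps hqs
    rw [opSum, Set.mem_add] at hps hqs
    obtain ⟨pa, hpa, pn, hpn, rfl⟩ := hps
    obtain ⟨qa, hqa, qn, hqn, rfl⟩ := hqs
    have h1 := hA.1 p q pa qa hpa hqa
    have h2 : pn (q - p) ≤ 0 := hpn.2 q hqn.1
    have h3 : qn (p - q) ≤ 0 := hqn.2 p hpn.1
    have hexp : ((pa + pn) - (qa + qn)) (p - q)
        = (pa - qa) (p - q) + (pn (p - q) - qn (p - q)) := by
      simp only [ContinuousLinearMap.sub_apply, ContinuousLinearMap.add_apply]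
      ring
    have h4 : pn (q - p) = - pn (p - q) := by
      rw [← map_neg]
      congr 1
      abel
    rw [hexp]
    rw [h4] at h2
    linarith
  have ha0dom : a0 ∈ domOp (opSum A (normalCone C)) := by
    obtain ⟨a0s, ha0s⟩ := ha0M
    refine ⟨a0s + 0, ?_⟩
    rw [opSum, Set.mem_add]
    exact ⟨a0s, ha0s, 0, ⟨interior_subset ha0C, fun c _ => by simp⟩, rfl⟩
  refine ⟨⟨hmonoB, ?_⟩, ?_⟩
  · intro x xs hrelated
    exact aux_main hA hlin hCcl hCconv ha0M ha0C isOpen_univ convex_univ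
      (mem_univ a0) ha0dom (mem_univ x) (fun y ys hys _ => hrelated y ys hys)
  · intro U hUo hUc hUne x xs hxU hrel
    obtain ⟨u0, hu0U, hu0dom⟩ := hUne
    exact aux_main hA hlin hCcl hCconv ha0M ha0C hUo hUc hu0U hu0dom hxU hrel

theorem stmt4 (A : X → Set (Dual' X)) (hA : MaxMonotone A) (hlin : LinearRel A)
    (C : Set X) (hCne : C.Nonempty) (hCcl : IsClosed C) (hCconv : Convex ℝ C)
    (hint : (domOp A ∩ interior C).Nonempty) :
    FPV (opSum A (normalCone C)) := by
  have h := stmt4' A hA hlin C hCne hCcl hCconv hint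
  exact ⟨h.1, h.2⟩
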